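/- Let R be a commutative ring and G a finite group whose order is invertible in R, acting on a commutative R-algebra B by R-algebra automorphisms; let A = B^G be the subalgebra of G-invariant elements. Then for every commutative R-algebra R', letting G act on R' ⊗_R B through its action on B, the natural map R' ⊗_R A → (R' ⊗_R B)^G is an isomorphism of R'-algebras. -/

import Mathlib

set_option synthInstance.maxHeartbeats 1000000
set_option maxHeartbeats 1000000


open scoped TensorProduct

/-- The subalgebra of `G`-invariant elements of an `R`-algebra `B` on which a
group `G` acts by `R`-algebra automorphisms. -/
def fixedSubalgebra (G R B : Type*) [Monoid G] [CommSemiring R] [Semiring B]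
    [Algebra R B] [MulSemiringAction G B] [SMulCommClass G R B] :
    Subalgebra R B where
  carrier := MulAction.fixedPoints G B
  mul_mem' := fun {x y} hx hy g => by
    rw [smul_mul', hx g, hy g]
  add_mem' := fun {x y} hx hy g => by
    rw [smul_add, hx g, hy g]
  algebraMap_mem' := fun r g => smul_algebraMap g r

/-- Let `G` be a finite group whose order is invertible in the commutative ring
`R`, acting on a commutative `R`-algebra `B` by `R`-algebra automorphisms, and let
`A = B^G`.  Then for every commutative `R`-algebra `R'`, the natural
`R'`-algebra homomorphism `R' ⊗[R] A → R' ⊗[R] B` is injective with image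
exactly the `G`-invariants of `R' ⊗[R] B` (where `G` acts through `B`); that is,
`R' ⊗[R] A → (R' ⊗[R] B)^G` is an isomorphism of `R'`-algebras. -/
theorem stmt_14 {R : Type*} [CommRing R] (G : Type*) [Group G] [Finite G]
    (hord : IsUnit (Nat.card G : R))
    (B : Type*) [CommRing B] [Algebra R B] [MulSemiringAction G B]
    [SMulCommClass G R B]
    (R' : Type*) [CommRing R'] [Algebra R R'] :
    Function.Injective
      (Algebra.TensorProduct.map (AlgHom.id R' R') (fixedSubalgebra G R B).val) ∧
    Set.range
      (Algebra.TensorProduct.map (AlgHom.id R' R') (fixedSubalgebra G R B).val) =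
      {x : R' ⊗[R] B | ∀ g : G,
        LinearMap.lTensor R' (DistribMulAction.toLinearMap R B g) x = x} := by
  classical
  have : Fintype G := Fintype.ofFinite G
  set A := fixedSubalgebra G R B with hA
  obtain ⟨u, hu⟩ := hord
  set r : R := ↑u⁻¹ with hr
  have hru : r * (Nat.card G : R) = 1 := by rw [← hu]; exact u.inv_mul
  -- the averaging (Reynolds) operator
  set avg : B →ₗ[R] B := r • ∑ g : G, DistribMulAction.toLinearMap R B g with havg
  have havg_apply : ∀ b : B, avg b = r • ∑ g : G, g • b := by
    intro b
    simp [havg, Finset.smul_sum]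
    rfl
  have havg_mem : ∀ b : B, avg b ∈ A := by
    intro b g
    rw [havg_apply, smul_comm, Finset.smul_sum]
    congr 1
    exact Fintype.sum_equiv (Equiv.mulLeft g) (fun x => g • (x • b))
      (fun x => x • b) (fun x => (mul_smul g x b).symm)
  have havg_fix : ∀ a : B, a ∈ A → avg a = a := by
    intro a ha
    rw [havg_apply]
    have : ∀ g : G, g • a = a := ha
    simp only [this, Finset.sum_const, Finset.card_univ]
    rw [← Nat.card_eq_fintype_card, ← Nat.cast_smul_eq_nsmul R, smul_smul, hru, one_smul]
  -- the projection onto A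
  set p : B →ₗ[R] A :=
    { toFun := fun b => ⟨avg b, havg_mem b⟩
      map_add' := fun x y => Subtype.ext (map_add avg x y)
      map_smul' := fun c x => Subtype.ext (map_smul avg c x) } with hp
  have hpv : p ∘ₗ A.val.toLinearMap = LinearMap.id := by
    ext a
    exact havg_fix a a.2
  have hvp : A.val.toLinearMap ∘ₗ p = avg := rfl
  set F := Algebra.TensorProduct.map (AlgHom.id R' R') A.val with hF
  have hFl : ∀ x, F x = LinearMap.lTensor R' A.val.toLinearMap x := by
    intro x
    induction x using TensorProduct.induction_on with
    | zero => rw [map_zero, map_zero]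
    | tmul a b => simp [hF]
    | add x y hx hy => rw [map_add, map_add, hx, hy]
  have hcomp : (LinearMap.lTensor R' p) ∘ₗ (LinearMap.lTensor R' A.val.toLinearMap)
      = LinearMap.id := by
    rw [← LinearMap.lTensor_comp, hpv, LinearMap.lTensor_id]
  constructor
  · intro x y hxy
    have hxy' : LinearMap.lTensor R' A.val.toLinearMap x
        = LinearMap.lTensor R' A.val.toLinearMap y := by rw [← hFl, ← hFl, hxy]
    have h2 := congrArg (LinearMap.lTensor R' p) hxy'
    rw [← LinearMap.comp_apply, ← LinearMap.comp_apply, hcomp,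
      LinearMap.id_apply, LinearMap.id_apply] at h2
    exact h2
  · ext x
    constructor
    · rintro ⟨y, rfl⟩ g
      have hgv : (DistribMulAction.toLinearMap R B g) ∘ₗ A.val.toLinearMap
          = A.val.toLinearMap := by
        ext a
        exact a.2 g
      rw [hFl, ← LinearMap.comp_apply, ← LinearMap.lTensor_comp, hgv]
    · intro hx
      have key : LinearMap.lTensor R' avg x = x := by
        have h1 : LinearMap.lTensor R' avg
            = r • ∑ g : G, LinearMap.lTensor R' (DistribMulAction.toLinearMap R B g) := by
          rw [havg, ← LinearMap.coe_lTensorHom, map_smul, map_sum]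
        rw [h1, LinearMap.smul_apply, LinearMap.sum_apply]
        have hx' : ∀ g : G,
            LinearMap.lTensor R' (DistribMulAction.toLinearMap R B g) x = x := hx
        simp only [hx']
        rw [Finset.sum_const, Finset.card_univ, ← Nat.card_eq_fintype_card,
          ← Nat.cast_smul_eq_nsmul R, smul_smul, hru, one_smul]
      refine ⟨LinearMap.lTensor R' p x, ?_⟩
      rw [hFl, ← LinearMap.comp_apply, ← LinearMap.lTensor_comp, hvp, key]
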